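/- Let λ ∈ (0,1) and θ ∈ (0,∞) with θ ≠ 1/2 and θ ≠ 1. Let c be the unique zero of f(c) = (c/((2θ−1+2cθ)(2−2θ−c(2θ−1))))^((1−θ)/(θ−1/2)) − (2θ−1+2cθ)²/(1−λ) in I(θ) and set s̄ = (c/((2θ−1+2cθ)(2−2θ−c(2θ−1))))^(1/(2θ−1)). Then 1/(1+c) + 1/(1 + c/((1−λ)s̄)) = 2θ; equivalently, θ − 1/(1+c) = 1/(1 + c/((1−λ)s̄)) − θ, i.e., the no-trade region in terms of the shadow price is symmetric relative to the Merton proportion θ. -/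

import Mathlib

open Real

/-- The interval `I(θ)` in which the root `c` of `f` is located. -/
noncomputable def noTradeInterval (θ : ℝ) : Set ℝ :=
  if θ < 1/2 then Set.Ioi ((1 - θ)/θ)
  else if θ < 1 then Set.Ioo ((1 - θ)/θ) ((1 - θ)/(θ - 1/2))
  else Set.Ioo ((1 - θ)/θ) 0

theorem growth_optimal_no_trade_region_symmetric
    (lam θ c sbar : ℝ)
    (hlam : lam ∈ Set.Ioo (0:ℝ) 1) (hθ : 0 < θ) (hθhalf : θ ≠ 1/2) (hθone : θ ≠ 1)
    (hcI : c ∈ noTradeInterval θ)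
    (hfc : (c / ((2*θ - 1 + 2*c*θ) * (2 - 2*θ - c*(2*θ - 1)))) ^ ((1 - θ)/(θ - 1/2))
        - (2*θ - 1 + 2*c*θ)^2 / (1 - lam) = 0)
    (hsbar : sbar = (c / ((2*θ - 1 + 2*c*θ) * (2 - 2*θ - c*(2*θ - 1)))) ^ (1/(2*θ - 1))) :
    1/(1 + c) + 1/(1 + c/((1 - lam) * sbar)) = 2*θ ∧
      θ - 1/(1 + c) = 1/(1 + c/((1 - lam) * sbar)) - θ := by
  obtain ⟨hlam0, hlam1⟩ := hlam
  have hlamne : (1:ℝ) - lam ≠ 0 := by linarith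
  have hθhalf' : 2*θ - 1 ≠ 0 := fun h => hθhalf (by linarith)
  have hθhalf'' : θ - 1/2 ≠ 0 := fun h => hθhalf (by linarith)
  set D := 2*θ - 1 + 2*c*θ with hDdef
  set E := 2 - 2*θ - c*(2*θ - 1) with hEdef
  have hfacts : (1 < D) ∧ E ≠ 0 ∧ c ≠ 0 ∧ 0 < c / (D*E) ∧ 0 < 1 + c := by
    unfold noTradeInterval at hcI
    split_ifs at hcI with h1 h2
    · have hc : (1-θ)/θ < c := hcI
      have hc' : 1 - θ < c*θ := by rw [div_lt_iff₀ hθ] at hc; linarith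
      have hc0 : 0 < c := lt_trans (div_pos (by linarith) hθ) hc
      have hD1 : 1 < D := by rw [hDdef]; nlinarith
      have hE : 0 < E := by
        rw [hEdef]; nlinarith [mul_pos hc0 (show (0:ℝ) < 1 - 2*θ by linarith)]
      exact ⟨hD1, ne_of_gt hE, ne_of_gt hc0,
        div_pos hc0 (mul_pos (by linarith) hE), by linarith⟩
    · have hθh : 1/2 < θ := lt_of_le_of_ne (not_lt.mp h1) (Ne.symm hθhalf)
      have hc : (1-θ)/θ < c := hcI.1
      have hc2 : c < (1-θ)/(θ - 1/2) := hcI.2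
      have hc' : 1 - θ < c*θ := by rw [div_lt_iff₀ hθ] at hc; linarith
      have hc0 : 0 < c := lt_of_le_of_lt (div_nonneg (by linarith) hθ.le) hc
      have hc2' : c*(θ - 1/2) < 1 - θ := by
        rw [lt_div_iff₀ (by linarith : (0:ℝ) < θ - 1/2)] at hc2; linarith
      have hD1 : 1 < D := by rw [hDdef]; nlinarith
      have hE : 0 < E := by rw [hEdef]; nlinarith
      exact ⟨hD1, ne_of_gt hE, ne_of_gt hc0,
        div_pos hc0 (mul_pos (by linarith) hE), by linarith⟩
    · have hθ1 : 1 < θ := lt_of_le_of_ne (by linarith [not_lt.mp h2]) (Ne.symm hθone)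
      have hc : (1-θ)/θ < c := hcI.1
      have hc0 : c < 0 := hcI.2
      have hc' : 1 - θ < c*θ := by rw [div_lt_iff₀ hθ] at hc; linarith
      have hD1 : 1 < D := by rw [hDdef]; nlinarith
      have hE : E < 0 := by
        rw [hEdef]
        nlinarith [mul_lt_mul_of_pos_left hc' (show (0:ℝ) < 2*θ - 1 by linarith)]
      have h1c : 0 < 1 + c := by
        have : (-1:ℝ) < (1-θ)/θ := by rw [lt_div_iff₀ hθ]; linarith
        linarith
      refine ⟨hD1, ne_of_lt hE, ne_of_lt hc0, ?_, h1c⟩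
      exact div_pos_iff.mpr (Or.inr ⟨hc0, mul_neg_of_pos_of_neg (by linarith) hE⟩)
  obtain ⟨hD1, hEne, hcne, hA, h1c⟩ := hfacts
  have hDne : D ≠ 0 := by linarith
  have hsbarpos : 0 < sbar := hsbar ▸ Real.rpow_pos_of_pos hA _
  have hA1 : sbar ^ (2*θ - 1) = c / (D*E) := by
    rw [hsbar, ← Real.rpow_mul hA.le, one_div, inv_mul_cancel₀ hθhalf', Real.rpow_one]
  have hexp : (1 - θ)/(θ - 1/2) = (1/(2*θ-1))*(2-2*θ) := by
    rw [div_mul_eq_mul_div, one_mul, div_eq_div_iff hθhalf'' hθhalf']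
    ring
  have h2 : sbar ^ (2 - 2*θ) = D^2/(1 - lam) := by
    have hx : (c/(D*E)) ^ ((1-θ)/(θ-1/2)) = sbar ^ (2-2*θ) := by
      rw [hsbar, hexp, Real.rpow_mul hA.le]
    rw [← hx]
    linarith [hfc]
  have h3 : sbar = D^2/(1-lam) * (c/(D*E)) := by
    have hone : (2-2*θ) + (2*θ-1) = 1 := by ring
    have := Real.rpow_add hsbarpos (2-2*θ) (2*θ-1)
    rw [hone, Real.rpow_one, h2, hA1] at this
    exact this
  have h4 : (1 - lam) * sbar = c*D/E := by
    rw [h3]; field_simp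
  have h5 : 1 + c/((1 - lam) * sbar) = (1+c)/D := by
    rw [h4]
    have hDE : D + E = 1 + c := by rw [hDdef, hEdef]; ring
    field_simp
    linear_combination c*D*hDE
  have h6 : 1/(1 + c/((1 - lam) * sbar)) = D/(1+c) := by
    rw [h5, one_div_div]
  have hsum : 1/(1 + c) + 1/(1 + c/((1 - lam) * sbar)) = 2*θ := by
    rw [h6, ← add_div]
    rw [div_eq_iff (ne_of_gt h1c), hDdef]
    ring
  exact ⟨hsum, by linarith⟩
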